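/- The Fenchel–Young loss upper-bounds the asymmetric Hausdorff divergence: assume the kernel matrix K = (exp(−c_{ij}/2))_{i,j} is positive definite. For every α ∈ △^d and f ∈ ℝ^d: D_Ω(α, g-softmax(f)) = ℓ_Ω(α, f^E) = ℓ_Ω(α, f) − ⟨α, f^E − f⟩ ≤ ℓ_Ω(α, f), with equality D_Ω(α, g-softmax(f)) = ℓ_Ω(α, f) whenever the support of g-softmax(f) equals the support of α. -/

import Mathlib

open Finset Real Filter

noncomputable section

/-- The probability simplex in `ℝ^d`. -/
def simplexS (d : ℕ) : Set (Fin d → ℝ) := stdSimplex ℝ (Fin d)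

/-- Transport plans between `α` and `β`: nonnegative matrices with prescribed marginals,
supported where `α i * β j > 0`. -/
def couplings {d : ℕ} (α β : Fin d → ℝ) : Set (Matrix (Fin d) (Fin d) ℝ) :=
  {p | (∀ i j, 0 ≤ p i j) ∧ (∀ i, ∑ j, p i j = α i) ∧ (∀ j, ∑ i, p i j = β j) ∧
    ∀ i j, α i * β j = 0 → p i j = 0}

/-- The entropy-regularized transport cost of a plan `p` (with the convention `0 log 0 = 0`,
which holds automatically since `Real.log 0 = 0`). -/
def OTcost {d : ℕ} (C : Matrix (Fin d) (Fin d) ℝ) (ε : ℝ) (α β : Fin d → ℝ)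
    (p : Matrix (Fin d) (Fin d) ℝ) : ℝ :=
  (∑ i, ∑ j, p i j * C i j) + ε * ∑ i, ∑ j, p i j * Real.log (p i j / (α i * β j))

/-- Entropy-regularized optimal transport cost `OT_{C,ε}(α,β)`. -/
def OT {d : ℕ} (C : Matrix (Fin d) (Fin d) ℝ) (ε : ℝ) (α β : Fin d → ℝ) : ℝ :=
  sInf (OTcost C ε α β '' couplings α β)

/-- The Sinkhorn negentropy `Ω_C(α) = -(1/2) OT_{C,2}(α,α)`. -/
def Omega {d : ℕ} (C : Matrix (Fin d) (Fin d) ℝ) (α : Fin d → ℝ) : ℝ :=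
  -(1 / 2) * OT C 2 α α

open scoped Classical

/-- `Φ_C(α,f) = Σ_{i,j} α_i α_j exp(-(f_i + f_j + c_{ij})/2)`. -/
def Phi {d : ℕ} (C : Matrix (Fin d) (Fin d) ℝ) (α f : Fin d → ℝ) : ℝ :=
  ∑ i, ∑ j, α i * α j * Real.exp (-(f i + f j + C i j) / 2)

/-- The geometric log-sum-exp `Ω_C^*(f) = -log min_{α ∈ △^d} Φ_C(α, f)`. -/
def OmegaStar {d : ℕ} (C : Matrix (Fin d) (Fin d) ℝ) (f : Fin d → ℝ) : ℝ :=
  -Real.log (sInf ((fun α => Phi C α f) '' simplexS d))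

/-- The geometric softmax: the (unique, when the kernel is positive definite) minimizer of
`Φ_C(·, f)` over the simplex. -/
def gsoftmax {d : ℕ} (C : Matrix (Fin d) (Fin d) ℝ) (f : Fin d → ℝ) : Fin d → ℝ :=
  if h : ∃ α ∈ simplexS d, IsMinOn (fun β => Phi C β f) (simplexS d) α
  then h.choose else fun _ => 0

/-- The soft C-transform `T(f,α)_i = -2 log Σ_j α_j exp((f_j - c_{ij})/2)`. -/
def Tsoft {d : ℕ} (C : Matrix (Fin d) (Fin d) ℝ) (f α : Fin d → ℝ) : Fin d → ℝ :=
  fun i => -2 * Real.log (∑ j, α j * Real.exp ((f j - C i j) / 2))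

/-- `f` is the symmetric Sinkhorn potential of `α`: `-f = T(-f, α)`. -/
def IsSinkhornPotential {d : ℕ} (C : Matrix (Fin d) (Fin d) ℝ) (α f : Fin d → ℝ) : Prop :=
  -f = Tsoft C (-f) α

/-- The symmetric Sinkhorn potential `∇Ω(α)`: the (unique, when the kernel is positive
definite) `f` with `-f = T(-f, α)`. -/
def gradOmega {d : ℕ} (C : Matrix (Fin d) (Fin d) ℝ) (α : Fin d → ℝ) : Fin d → ℝ :=
  if h : ∃ f : Fin d → ℝ, IsSinkhornPotential C α f then h.choose else fun _ => 0

/-- The extrapolation `f^E = -T(-(f - Ω_C^*(f)·1), g-softmax(f)) + Ω_C^*(f)·1`. -/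
def extrap {d : ℕ} (C : Matrix (Fin d) (Fin d) ℝ) (f : Fin d → ℝ) : Fin d → ℝ :=
  fun i => -(Tsoft C (fun j => -(f j - OmegaStar C f)) (gsoftmax C f) i) + OmegaStar C f

/-- The kernel matrix `K = (exp(-c_{ij}/2))_{ij}`. -/
def kernelK {d : ℕ} (C : Matrix (Fin d) (Fin d) ℝ) : Matrix (Fin d) (Fin d) ℝ :=
  Matrix.of fun i j => Real.exp (-(C i j) / 2)

/-- The Fenchel-Young loss `ℓ_Ω(α,f) = Ω_C^*(f) + Ω_C(α) - ⟨α, f⟩`. -/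
def FYloss {d : ℕ} (C : Matrix (Fin d) (Fin d) ℝ) (α f : Fin d → ℝ) : ℝ :=
  OmegaStar C f + Omega C α - ∑ i, α i * f i

/-- The asymmetric Hausdorff (Bregman) divergence
`D_Ω(α,β) = Ω_C(α) - Ω_C(β) - ⟨∇Ω(β), α - β⟩`. -/
def DOmega {d : ℕ} (C : Matrix (Fin d) (Fin d) ℝ) (α β : Fin d → ℝ) : ℝ :=
  Omega C α - Omega C β - ∑ i, gradOmega C β i * (α i - β i)

namespace FYAux

variable {d : ℕ}

def Bform (M : Matrix (Fin d) (Fin d) ℝ) (x y : Fin d → ℝ) : ℝ :=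
  ∑ i, ∑ j, x i * y j * M i j

lemma Bform_expand (M : Matrix (Fin d) (Fin d) ℝ) (x v : Fin d → ℝ) (t : ℝ) :
    Bform M (fun k => x k + t * v k) (fun k => x k + t * v k) =
      Bform M x x + t * (Bform M x v + Bform M v x) + t ^ 2 * Bform M v v := by
  unfold Bform
  rw [mul_add, Finset.mul_sum, Finset.mul_sum, Finset.mul_sum, ← Finset.sum_add_distrib,
    ← Finset.sum_add_distrib, ← Finset.sum_add_distrib]
  refine Finset.sum_congr rfl fun i _ => ?_
  rw [Finset.mul_sum, Finset.mul_sum, Finset.mul_sum, ← Finset.sum_add_distrib,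
    ← Finset.sum_add_distrib, ← Finset.sum_add_distrib]
  refine Finset.sum_congr rfl fun j _ => ?_
  ring

lemma Bform_comm (M : Matrix (Fin d) (Fin d) ℝ) (hM : ∀ i j, M i j = M j i)
    (x y : Fin d → ℝ) : Bform M x y = Bform M y x := by
  unfold Bform
  rw [Finset.sum_comm]
  refine Finset.sum_congr rfl fun k _ => Finset.sum_congr rfl fun m _ => ?_
  rw [hM m k]; ring

lemma Bform_nonneg {C : Matrix (Fin d) (Fin d) ℝ} (hK : (kernelK C).PosDef)
    (g : Fin d → ℝ) (v : Fin d → ℝ) :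
    0 ≤ Bform (fun i j => Real.exp (-(g i + g j + C i j) / 2)) v v := by
  have h := hK.posSemidef.dotProduct_mulVec_nonneg (fun i => v i * Real.exp (-(g i) / 2))
  refine le_trans h (le_of_eq ?_)
  simp only [dotProduct, Matrix.mulVec, kernelK, Matrix.of_apply, Bform, Pi.star_apply,
    star_trivial]
  refine Finset.sum_congr rfl fun i _ => ?_
  rw [Finset.mul_sum]
  refine Finset.sum_congr rfl fun j _ => ?_
  rw [show -(g i + g j + C i j) / 2 = -(g i) / 2 + (-(C i j) / 2 + -(g j) / 2) by ring,
    Real.exp_add, Real.exp_add]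
  ring

lemma sum_exp_pos {β : Fin d → ℝ} (hβ0 : ∀ i, 0 ≤ β i) (hβ1 : ∑ i, β i = 1)
    (g : Fin d → ℝ) : 0 < ∑ j, β j * Real.exp (g j) := by
  obtain ⟨j0, hj0⟩ : ∃ j, 0 < β j := by
    by_contra hc
    push_neg at hc
    have : ∑ i, β i = 0 :=
      Finset.sum_eq_zero fun i _ => le_antisymm (hc i) (hβ0 i)
    rw [hβ1] at this; norm_num at this
  refine Finset.sum_pos' (fun j _ => mul_nonneg (hβ0 j) (Real.exp_pos _).le)
    ⟨j0, Finset.mem_univ _, mul_pos hj0 (Real.exp_pos _)⟩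

lemma potential_key {C : Matrix (Fin d) (Fin d) ℝ} {β h : Fin d → ℝ}
    (hβ0 : ∀ i, 0 ≤ β i) (hβ1 : ∑ i, β i = 1)
    (hpot : IsSinkhornPotential C β h) (i : Fin d) :
    ∑ j, β j * Real.exp ((-h j - C i j) / 2) = Real.exp (h i / 2) := by
  have hS : 0 < ∑ j, β j * Real.exp ((-h j - C i j) / 2) :=
    sum_exp_pos hβ0 hβ1 (fun j => (-h j - C i j) / 2)
  have hc := congrFun hpot i
  simp only [Pi.neg_apply, Tsoft] at hc
  have hlog : Real.log (∑ j, β j * Real.exp ((-h j - C i j) / 2)) = h i / 2 := by linarith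
  rw [← hlog, Real.exp_log hS]





lemma potential_unique {C : Matrix (Fin d) (Fin d) ℝ} {β g g' : Fin d → ℝ}
    (hβ0 : ∀ i, 0 ≤ β i) (hβ1 : ∑ i, β i = 1)
    (hg : IsSinkhornPotential C β g) (hg' : IsSinkhornPotential C β g') : g = g' := by
  have key := fun i => potential_key hβ0 hβ1 hg i
  have key' := fun i => potential_key hβ0 hβ1 hg' i
  classical
  set S : Finset (Fin d) := Finset.univ.filter (fun j => 0 < β j) with hSdef
  have hSmem : ∀ j, 0 < β j → j ∈ S := fun j hj => by simp [hSdef, hj]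
  have hSne : S.Nonempty := by
    by_contra hne
    rw [Finset.not_nonempty_iff_eq_empty] at hne
    have hz : ∑ i, β i = 0 := Finset.sum_eq_zero (fun i _ => by
      by_contra h0
      have hpos : 0 < β i := lt_of_le_of_ne (hβ0 i) (Ne.symm h0)
      have := hSmem i hpos
      rw [hne] at this
      exact absurd this (Finset.notMem_empty i))
    rw [hβ1] at hz; norm_num at hz
  obtain ⟨i0, hi0, hmax⟩ := S.exists_max_image (fun j => Real.exp (g' j / 2) / Real.exp (g j / 2)) hSne
  obtain ⟨i1, hi1, hmin⟩ := S.exists_min_image (fun j => Real.exp (g' j / 2) / Real.exp (g j / 2)) hSne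
  set b := Real.exp (g' i1 / 2) / Real.exp (g i1 / 2) with hbdef
  set c := Real.exp (g' i0 / 2) / Real.exp (g i0 / 2) with hcdef
  have hbpos : 0 < b := div_pos (Real.exp_pos _) (Real.exp_pos _)
  have hcpos : 0 < c := div_pos (Real.exp_pos _) (Real.exp_pos _)
  have expsplit : ∀ x cc : ℝ, Real.exp ((-x - cc) / 2) = (Real.exp (x / 2))⁻¹ * Real.exp (-cc / 2) := by
    intro x cc
    rw [show (-x - cc) / 2 = -(x / 2) + -cc / 2 by ring, Real.exp_add, Real.exp_neg]
  have term_le : ∀ i j, β j * Real.exp ((-g' j - C i j) / 2)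
      ≤ b⁻¹ * (β j * Real.exp ((-g j - C i j) / 2)) := by
    intro i j
    rcases eq_or_lt_of_le (hβ0 j) with h0 | hpos
    · rw [← h0]; simp
    · have hjS : j ∈ S := hSmem j hpos
      have hbj : b * Real.exp (g j / 2) ≤ Real.exp (g' j / 2) := by
        have hm := hmin j hjS
        rw [le_div_iff₀ (Real.exp_pos _)] at hm
        linarith
      have h1 : (Real.exp (g' j / 2))⁻¹ ≤ (b * Real.exp (g j / 2))⁻¹ :=
        inv_anti₀ (by positivity) hbj
      rw [expsplit (g' j) (C i j), expsplit (g j) (C i j)]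
      calc β j * ((Real.exp (g' j / 2))⁻¹ * Real.exp (-C i j / 2))
          ≤ β j * ((b * Real.exp (g j / 2))⁻¹ * Real.exp (-C i j / 2)) := by
            refine mul_le_mul_of_nonneg_left ?_ (hβ0 j)
            exact mul_le_mul_of_nonneg_right h1 (Real.exp_pos _).le
        _ = b⁻¹ * (β j * ((Real.exp (g j / 2))⁻¹ * Real.exp (-C i j / 2))) := by
            rw [mul_inv]; ring
  have term_ge : ∀ i j, c⁻¹ * (β j * Real.exp ((-g j - C i j) / 2))
      ≤ β j * Real.exp ((-g' j - C i j) / 2) := by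
    intro i j
    rcases eq_or_lt_of_le (hβ0 j) with h0 | hpos
    · rw [← h0]; simp
    · have hjS : j ∈ S := hSmem j hpos
      have hcj : Real.exp (g' j / 2) ≤ c * Real.exp (g j / 2) := by
        have hm := hmax j hjS
        rw [div_le_iff₀ (Real.exp_pos _)] at hm
        linarith
      have h1 : (c * Real.exp (g j / 2))⁻¹ ≤ (Real.exp (g' j / 2))⁻¹ :=
        inv_anti₀ (Real.exp_pos _) hcj
      rw [expsplit (g' j) (C i j), expsplit (g j) (C i j)]
      calc c⁻¹ * (β j * ((Real.exp (g j / 2))⁻¹ * Real.exp (-C i j / 2)))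
          = β j * ((c * Real.exp (g j / 2))⁻¹ * Real.exp (-C i j / 2)) := by
            rw [mul_inv]; ring
        _ ≤ β j * ((Real.exp (g' j / 2))⁻¹ * Real.exp (-C i j / 2)) := by
            refine mul_le_mul_of_nonneg_left ?_ (hβ0 j)
            exact mul_le_mul_of_nonneg_right h1 (Real.exp_pos _).le
  have claim1 : ∀ i, Real.exp (g' i / 2) ≤ b⁻¹ * Real.exp (g i / 2) := by
    intro i
    rw [← key' i, ← key i, Finset.mul_sum]
    exact Finset.sum_le_sum fun j _ => term_le i j
  have claim2 : ∀ i, c⁻¹ * Real.exp (g i / 2) ≤ Real.exp (g' i / 2) := by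
    intro i
    rw [← key' i, ← key i, Finset.mul_sum]
    exact Finset.sum_le_sum fun j _ => term_ge i j
  have hgb1 : Real.exp (g' i1 / 2) = b * Real.exp (g i1 / 2) := by
    rw [hbdef, div_mul_cancel₀ _ (Real.exp_pos (g i1 / 2)).ne']
  have hgc0 : Real.exp (g' i0 / 2) = c * Real.exp (g i0 / 2) := by
    rw [hcdef, div_mul_cancel₀ _ (Real.exp_pos (g i0 / 2)).ne']
  have hbc_ge : 1 ≤ b * c := by
    have h2 := claim2 i1
    rw [hgb1] at h2
    have h3 : c⁻¹ ≤ b := le_of_mul_le_mul_right h2 (Real.exp_pos (g i1 / 2))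
    have h4 := mul_le_mul_of_nonneg_right h3 hcpos.le
    rwa [inv_mul_cancel₀ hcpos.ne'] at h4
  have hbc_le : b * c ≤ 1 := by
    have h1 := claim1 i0
    rw [hgc0] at h1
    have h3 : c ≤ b⁻¹ := le_of_mul_le_mul_right h1 (Real.exp_pos (g i0 / 2))
    have h4 := mul_le_mul_of_nonneg_left h3 hbpos.le
    rwa [mul_inv_cancel₀ hbpos.ne'] at h4
  have hbc : b * c = 1 := le_antisymm hbc_le hbc_ge
  have hcb : c = b⁻¹ := eq_inv_of_mul_eq_one_left (by rw [mul_comm]; exact hbc)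
  have hzero : ∑ j, (b⁻¹ * (β j * Real.exp ((-g j - C i0 j) / 2))
      - β j * Real.exp ((-g' j - C i0 j) / 2)) = 0 := by
    rw [Finset.sum_sub_distrib, ← Finset.mul_sum, key i0, key' i0, hgc0, hcb]
    ring
  have hterm0 := (Finset.sum_eq_zero_iff_of_nonneg
    (fun j _ => sub_nonneg.mpr (term_le i0 j))).mp hzero
  have hratio : ∀ j, 0 < β j → Real.exp (g' j / 2) = b * Real.exp (g j / 2) := by
    intro j hpos
    have h0 := sub_eq_zero.mp (hterm0 j (Finset.mem_univ j))
    rw [expsplit (g' j) (C i0 j), expsplit (g j) (C i0 j)] at h0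
    -- b⁻¹ * (β j * (e_g⁻¹ * E)) = β j * (e_g'⁻¹ * E)
    have hE : (0:ℝ) < Real.exp (-C i0 j / 2) := Real.exp_pos _
    have h1 : (b * Real.exp (g j / 2))⁻¹ = (Real.exp (g' j / 2))⁻¹ := by
      rw [mul_inv]
      field_simp at h0 ⊢
      nlinarith [h0, Real.exp_pos (g j / 2), Real.exp_pos (g' j / 2)]
    have := inv_injective h1
    exact this.symm
  have hb1 : b = 1 := by
    have hpos0 : 0 < β i0 := by
      have := hi0
      rw [hSdef, Finset.mem_filter] at this
      exact this.2
    have h5 := hratio i0 hpos0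
    rw [hgc0] at h5
    have hbeqc : c = b := by
      exact mul_right_cancel₀ (Real.exp_pos (g i0 / 2)).ne' h5
    rw [hbeqc] at hbc
    nlinarith
  have hsup : ∀ j, 0 < β j → g' j = g j := by
    intro j hpos
    have := hratio j hpos
    rw [hb1, one_mul] at this
    have h2 := Real.exp_injective this
    linarith
  funext i
  have hfin : Real.exp (g i / 2) = Real.exp (g' i / 2) := by
    rw [← key i, ← key' i]
    refine Finset.sum_congr rfl fun j _ => ?_
    rcases eq_or_lt_of_le (hβ0 j) with h0 | hpos
    · rw [← h0]; simp
    · rw [hsup j hpos]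
  have := Real.exp_injective hfin
  linarith


lemma omega_of_potential {C : Matrix (Fin d) (Fin d) ℝ} (hCsym : C.IsSymm)
    {β h : Fin d → ℝ} (hβ0 : ∀ i, 0 ≤ β i) (hβ1 : ∑ i, β i = 1)
    (hpot : IsSinkhornPotential C β h) :
    Omega C β = ∑ i, β i * h i := by
  classical
  have key := fun i => potential_key hβ0 hβ1 hpot i
  have hCs : ∀ a b', C a b' = C b' a := fun a b' => hCsym.apply b' a
  set pp : Matrix (Fin d) (Fin d) ℝ :=
    fun i j => β i * β j * Real.exp (-(h i + h j + C i j) / 2) with hpp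
  have hppsplit : ∀ i j, pp i j
      = (β i * Real.exp (-h i / 2)) * (β j * Real.exp ((-h j - C i j) / 2)) := by
    intro i j
    simp only [hpp]
    rw [show -(h i + h j + C i j) / 2 = -h i / 2 + (-h j - C i j) / 2 by ring, Real.exp_add]
    ring
  have hrow : ∀ i, ∑ j, pp i j = β i := by
    intro i
    rw [Finset.sum_congr rfl fun j _ => hppsplit i j, ← Finset.mul_sum, key i, mul_assoc,
      ← Real.exp_add, show -h i / 2 + h i / 2 = 0 by ring, Real.exp_zero, mul_one]
  have hsympp : ∀ i j, pp i j = pp j i := by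
    intro i j
    simp only [hpp]
    rw [hCs i j, show -(h i + h j + C j i) / 2 = -(h j + h i + C j i) / 2 by ring]
    ring
  have hcol : ∀ j, ∑ i, pp i j = β j := by
    intro j
    rw [Finset.sum_congr rfl fun i _ => hsympp i j]
    exact hrow j
  have hpp0 : ∀ i j, 0 ≤ pp i j := fun i j => by
    simp only [hpp]
    exact mul_nonneg (mul_nonneg (hβ0 i) (hβ0 j)) (Real.exp_pos _).le
  have hppsupp : ∀ i j, β i * β j = 0 → pp i j = 0 := by
    intro i j hz
    simp only [hpp]
    rcases mul_eq_zero.mp hz with h' | h' <;> rw [h'] <;> ring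
  have hmem : pp ∈ couplings β β := ⟨hpp0, hrow, hcol, hppsupp⟩
  set V := ∑ i, β i * h i with hV
  have hmass : ∑ i, ∑ j, pp i j = 1 := by
    rw [Finset.sum_congr rfl fun i _ => hrow i, hβ1]
  have hmarg : ∀ q : Matrix (Fin d) (Fin d) ℝ, (∀ i, ∑ j, q i j = β i) →
      (∀ j, ∑ i, q i j = β j) → ∑ i, ∑ j, q i j * (h i + h j) = 2 * V := by
    intro q hr hc
    have e1 : ∑ i, ∑ j, q i j * h i = V := by
      rw [hV]
      refine Finset.sum_congr rfl fun i _ => ?_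
      rw [← Finset.sum_mul, hr i]
    have e2 : ∑ i, ∑ j, q i j * h j = V := by
      rw [Finset.sum_comm, hV]
      refine Finset.sum_congr rfl fun j _ => ?_
      rw [← Finset.sum_mul, hc j]
    calc ∑ i, ∑ j, q i j * (h i + h j)
        = ∑ i, ∑ j, (q i j * h i + q i j * h j) := by
          refine Finset.sum_congr rfl fun i _ => Finset.sum_congr rfl fun j _ => by ring
      _ = (∑ i, ∑ j, q i j * h i) + ∑ i, ∑ j, q i j * h j := by
          simp only [Finset.sum_add_distrib]
      _ = 2 * V := by rw [e1, e2]; ring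
  have hcost : OTcost C 2 β β pp = -(2 * V) := by
    unfold OTcost
    have hterm : ∀ i j, pp i j * C i j + 2 * (pp i j * Real.log (pp i j / (β i * β j)))
        = -(pp i j * (h i + h j)) := by
      intro i j
      by_cases hz : β i * β j = 0
      · rw [hppsupp i j hz]; ring
      · have hdiv : pp i j / (β i * β j) = Real.exp (-(h i + h j + C i j) / 2) := by
          simp only [hpp]
          exact mul_div_cancel_left₀ _ hz
        rw [hdiv, Real.log_exp]; ring
    have hcomb : (∑ i, ∑ j, pp i j * C i j)
        + 2 * ∑ i, ∑ j, pp i j * Real.log (pp i j / (β i * β j))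
        = ∑ i, ∑ j, (pp i j * C i j + 2 * (pp i j * Real.log (pp i j / (β i * β j)))) := by
      rw [Finset.mul_sum, ← Finset.sum_add_distrib]
      refine Finset.sum_congr rfl fun i _ => ?_
      rw [Finset.mul_sum, ← Finset.sum_add_distrib]
    rw [hcomb, Finset.sum_congr rfl fun i _ => Finset.sum_congr rfl fun j _ => hterm i j]
    have hneg : ∑ i, ∑ j, -(pp i j * (h i + h j)) = -(∑ i, ∑ j, pp i j * (h i + h j)) := by
      simp only [Finset.sum_neg_distrib]
    rw [hneg, hmarg pp hrow hcol]
  have hlb : ∀ p : Matrix (Fin d) (Fin d) ℝ, p ∈ couplings β β →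
      -(2 * V) ≤ OTcost C 2 β β p := by
    intro p hp
    obtain ⟨hp0, hprow, hpcol, hpsupp⟩ := hp
    have hpmass : ∑ i, ∑ j, p i j = 1 := by
      rw [Finset.sum_congr rfl fun i _ => hprow i, hβ1]
    have hterm : ∀ i j, -(p i j * (h i + h j)) + 2 * (p i j - pp i j)
        ≤ p i j * C i j + 2 * (p i j * Real.log (p i j / (β i * β j))) := by
      intro i j
      rcases eq_or_lt_of_le (hp0 i j) with hz | hppos
      · rw [← hz]
        have := hpp0 i j
        simp only [zero_mul, neg_zero, zero_sub, mul_neg, zero_add, mul_zero, zero_div]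
        linarith
      · have hββ : β i * β j ≠ 0 := fun hz => by
          rw [hpsupp i j hz] at hppos; exact lt_irrefl _ hppos
        have hpppp : 0 < pp i j := by
          simp only [hpp]
          have hpos2 : 0 < β i * β j :=
            lt_of_le_of_ne (mul_nonneg (hβ0 i) (hβ0 j)) (Ne.symm hββ)
          exact mul_pos hpos2 (Real.exp_pos _)
        have hppeq : pp i j = (β i * β j) * Real.exp (-(h i + h j + C i j) / 2) := by
          simp only [hpp]
        have hlog : Real.log (p i j / (β i * β j))
            = Real.log (p i j / pp i j) + -(h i + h j + C i j) / 2 := by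
          rw [Real.log_div hppos.ne' hββ, Real.log_div hppos.ne' hpppp.ne', hppeq,
            Real.log_mul hββ (Real.exp_ne_zero _), Real.log_exp]
          ring
        have hentropy : p i j - pp i j ≤ p i j * Real.log (p i j / pp i j) := by
          have hl := Real.log_le_sub_one_of_pos (div_pos hpppp hppos)
          have hinv : Real.log (pp i j / p i j) = -Real.log (p i j / pp i j) := by
            rw [← Real.log_inv, inv_div]
          rw [hinv] at hl
          have h2 : p i j * (pp i j / p i j - 1) = pp i j - p i j := by
            field_simp
          nlinarith [hl, hppos]
        rw [hlog]
        nlinarith [hentropy]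
    have hsum := Finset.sum_le_sum (fun i (_ : i ∈ Finset.univ) =>
      Finset.sum_le_sum (fun j (_ : j ∈ Finset.univ) => hterm i j))
    have hL : ∑ i, ∑ j, (-(p i j * (h i + h j)) + 2 * (p i j - pp i j)) = -(2 * V) := by
      have hre : ∀ i j, -(p i j * (h i + h j)) + 2 * (p i j - pp i j)
          = -(p i j * (h i + h j)) + (2 * p i j - 2 * pp i j) := fun i j => by ring
      rw [Finset.sum_congr rfl fun i _ => Finset.sum_congr rfl fun j _ => hre i j]
      simp only [Finset.sum_add_distrib, Finset.sum_sub_distrib, Finset.sum_neg_distrib,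
        ← Finset.mul_sum]
      rw [hmarg p hprow hpcol, hpmass, hmass]
      ring
    have hR : ∑ i, ∑ j, (p i j * C i j + 2 * (p i j * Real.log (p i j / (β i * β j))))
        = OTcost C 2 β β p := by
      unfold OTcost
      rw [Finset.mul_sum, ← Finset.sum_add_distrib]
      refine Finset.sum_congr rfl fun i _ => ?_
      rw [Finset.mul_sum, ← Finset.sum_add_distrib]
    rw [hL, hR] at hsum
    exact hsum
  have hleast : IsLeast (OTcost C 2 β β '' couplings β β) (-(2 * V)) := by
    constructor
    · exact ⟨pp, hmem, hcost⟩
    · rintro q ⟨p, hp, rfl⟩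
      exact hlb p hp
  unfold Omega OT
  rw [hleast.csInf_eq]
  ring

lemma kkt_lemma {C : Matrix (Fin d) (Fin d) ℝ} (hCsym : C.IsSymm)
    (hK : (kernelK C).PosDef) (f : Fin d → ℝ) {β : Fin d → ℝ}
    (hβ : β ∈ simplexS d) (hmin : IsMinOn (fun γ => Phi C γ f) (simplexS d) β)
    (i : Fin d) :
    Phi C β f ≤ ∑ j, β j * Real.exp (-(f i + f j + C i j) / 2) := by
  classical
  have hCs : ∀ a b', C a b' = C b' a := fun a b' => hCsym.apply b' a
  set M : Matrix (Fin d) (Fin d) ℝ :=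
    fun a b' => Real.exp (-(f a + f b' + C a b') / 2) with hM
  have hMsym : ∀ a b', M a b' = M b' a := by
    intro a b'
    simp only [hM]
    rw [hCs a b', show -(f a + f b' + C b' a) / 2 = -(f b' + f a + C b' a) / 2 by ring]
  have hPhiB : ∀ γ : Fin d → ℝ, Phi C γ f = Bform M γ γ := fun γ => by
    simp only [Phi, Bform, hM]
  set e : Fin d → ℝ := Pi.single i 1 with he_def
  have he : e ∈ simplexS d := by
    rw [he_def]; exact single_mem_stdSimplex ℝ i
  set v : Fin d → ℝ := fun k => e k - β k with hv
  have hQv : 0 ≤ Bform M v v := by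
    rw [hM]
    exact Bform_nonneg hK f v
  have hkey : ∀ t : ℝ, 0 < t → t ≤ 1 →
      0 ≤ t * (Bform M β v + Bform M v β) + t ^ 2 * Bform M v v := by
    intro t ht ht1
    have hmem : (fun k => β k + t * v k) ∈ simplexS d := by
      have hc := convex_stdSimplex ℝ (Fin d) hβ he (by linarith : (0:ℝ) ≤ 1 - t) ht.le
        (by ring)
      have heq : (fun k => β k + t * v k) = (1 - t) • β + t • e := by
        funext k
        simp only [hv, Pi.add_apply, Pi.smul_apply, smul_eq_mul]
        ring
      rw [heq]
      exact hc
    have h1 := isMinOn_iff.mp hmin _ hmem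
    rw [hPhiB, hPhiB, Bform_expand M β v t] at h1
    linarith
  have ha : 0 ≤ Bform M β v + Bform M v β := by
    by_contra hneg
    push_neg at hneg
    set a := Bform M β v + Bform M v β with hadef
    set q := Bform M v v with hqdef
    have hstep : ∀ t : ℝ, 0 < t → t ≤ 1 → 0 ≤ a + t * q := by
      intro t ht ht1
      have h2 := hkey t ht ht1
      have h3 : t * (a + t * q) = t * a + t ^ 2 * q := by ring
      have h4 : t * 0 ≤ t * (a + t * q) := by rw [h3]; linarith
      exact le_of_mul_le_mul_left h4 ht
    set t0 := min 1 (-a / (q + 1)) with ht0def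
    have ht0pos : 0 < t0 := lt_min one_pos (div_pos (by linarith) (by linarith))
    have h5 := hstep t0 ht0pos (min_le_left _ _)
    have h6 : t0 * (q + 1) ≤ -a := by
      have h7 : t0 ≤ -a / (q + 1) := min_le_right _ _
      rwa [le_div_iff₀ (by linarith : (0:ℝ) < q + 1)] at h7
    nlinarith
  have hsplit : Bform M v β = Bform M e β - Bform M β β := by
    simp only [Bform, hv]
    rw [← Finset.sum_sub_distrib]
    refine Finset.sum_congr rfl fun x _ => ?_
    rw [← Finset.sum_sub_distrib]
    exact Finset.sum_congr rfl fun y _ => by ring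
  have hcommB : Bform M β v = Bform M v β := Bform_comm M hMsym β v
  have hBeβ : Bform M e β = ∑ j, β j * M i j := by
    simp only [Bform]
    have hfac : ∀ x, (∑ j, e x * β j * M x j) = e x * ∑ j, β j * M x j := by
      intro x
      rw [Finset.mul_sum]
      exact Finset.sum_congr rfl fun j _ => by ring
    rw [Finset.sum_congr rfl fun x _ => hfac x,
      Fintype.sum_eq_single i (fun x hx => by simp [he_def, Pi.single_eq_of_ne hx])]
    simp [he_def]
  have hfinal : Bform M β β ≤ Bform M e β := by linarith [ha, hcommB, hsplit]
  calc Phi C β f = Bform M β β := hPhiB β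
    _ ≤ Bform M e β := hfinal
    _ = ∑ j, β j * M i j := hBeβ
    _ = ∑ j, β j * Real.exp (-(f i + f j + C i j) / 2) := by simp only [hM]

end FYAux

/-- The Fenchel-Young loss upper-bounds the asymmetric Hausdorff divergence:
`D_Ω(α, g-softmax(f)) = ℓ_Ω(α, f^E) = ℓ_Ω(α, f) - ⟨α, f^E - f⟩ ≤ ℓ_Ω(α, f)`, with
equality when the supports of `g-softmax(f)` and `α` coincide. -/
theorem fy_loss_upper_bounds_hausdorff (d : ℕ) (hd : 1 ≤ d)
    (C : Matrix (Fin d) (Fin d) ℝ) (hCsym : C.IsSymm) (hCdiag : ∀ i, C i i = 0)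
    (hK : (kernelK C).PosDef) (α : Fin d → ℝ) (hα : α ∈ simplexS d) (f : Fin d → ℝ) :
    DOmega C α (gsoftmax C f) = FYloss C α (extrap C f) ∧
    FYloss C α (extrap C f) = FYloss C α f - ∑ i, α i * (extrap C f i - f i) ∧
    DOmega C α (gsoftmax C f) ≤ FYloss C α f ∧
    (Function.support (gsoftmax C f) = Function.support α →
      DOmega C α (gsoftmax C f) = FYloss C α f) := by
  classical
  have hcont : Continuous fun γ : Fin d → ℝ => Phi C γ f := by
    unfold Phi
    refine continuous_finset_sum _ fun i _ => continuous_finset_sum _ fun j _ => ?_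
    exact ((continuous_apply i).mul (continuous_apply j)).mul continuous_const
  have hne : (simplexS d).Nonempty :=
    ⟨Pi.single ⟨0, hd⟩ 1, single_mem_stdSimplex ℝ _⟩
  have hex : ∃ β ∈ simplexS d, IsMinOn (fun γ => Phi C γ f) (simplexS d) β :=
    (isCompact_stdSimplex ℝ (Fin d)).exists_isMinOn hne hcont.continuousOn
  set β := gsoftmax C f with hβdef
  have hβeq : β = hex.choose := by rw [hβdef, gsoftmax, dif_pos hex]
  have hβS : β ∈ simplexS d := by rw [hβeq]; exact hex.choose_spec.1
  have hβmin : IsMinOn (fun γ => Phi C γ f) (simplexS d) β := by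
    rw [hβeq]; exact hex.choose_spec.2
  have hβc : (∀ i, 0 ≤ β i) ∧ ∑ i, β i = 1 := hβS
  have hβ0 : ∀ i, 0 ≤ β i := hβc.1
  have hβ1 : ∑ i, β i = 1 := hβc.2
  have hαc : (∀ i, 0 ≤ α i) ∧ ∑ i, α i = 1 := hα
  set s : Fin d → ℝ := fun i => ∑ j, β j * Real.exp (-(f j + C i j) / 2) with hsdef
  have hspos : ∀ i, 0 < s i := fun i => by
    simp only [hsdef]
    exact FYAux.sum_exp_pos hβ0 hβ1 (fun j => -(f j + C i j) / 2)
  set P := Phi C β f with hPdef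
  have hPpos : 0 < P := by
    obtain ⟨j0, hj0⟩ : ∃ j, 0 < β j := by
      by_contra hc
      push_neg at hc
      have hz : ∑ i, β i = 0 :=
        Finset.sum_eq_zero fun i _ => le_antisymm (hc i) (hβ0 i)
      rw [hβ1] at hz; norm_num at hz
    rw [hPdef]
    unfold Phi
    refine Finset.sum_pos' (fun i _ => Finset.sum_nonneg fun j _ =>
      mul_nonneg (mul_nonneg (hβ0 i) (hβ0 j)) (Real.exp_pos _).le)
      ⟨j0, Finset.mem_univ _, ?_⟩
    refine Finset.sum_pos' (fun j _ =>
      mul_nonneg (mul_nonneg (hβ0 j0) (hβ0 j)) (Real.exp_pos _).le)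
      ⟨j0, Finset.mem_univ _, mul_pos (mul_pos hj0 hj0) (Real.exp_pos _)⟩
  have hsinf : sInf ((fun γ => Phi C γ f) '' simplexS d) = P := by
    refine IsLeast.csInf_eq ⟨⟨β, hβS, hPdef.symm⟩, ?_⟩
    rintro y ⟨γ, hγ, rfl⟩
    rw [hPdef]
    exact isMinOn_iff.mp hβmin γ hγ
  set A := OmegaStar C f with hAdef
  have hA : A = -Real.log P := by rw [hAdef, OmegaStar, hsinf]
  have hAP : Real.exp (-A) = P := by rw [hA, neg_neg, Real.exp_log hPpos]
  have hlogsP : Real.log P = -A := by rw [hA]; ring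
  have hks : ∀ i, ∑ j, β j * Real.exp (-(f i + f j + C i j) / 2)
      = Real.exp (-f i / 2) * s i := by
    intro i
    simp only [hsdef]
    rw [Finset.mul_sum]
    refine Finset.sum_congr rfl fun j _ => ?_
    rw [show -(f i + f j + C i j) / 2 = -f i / 2 + -(f j + C i j) / 2 by ring, Real.exp_add]
    ring
  have hge : ∀ i, P ≤ Real.exp (-f i / 2) * s i := fun i => by
    rw [← hks i, hPdef]
    exact FYAux.kkt_lemma hCsym hK f hβS hβmin i
  have hPsum : ∑ i, β i * (Real.exp (-f i / 2) * s i) = P := by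
    rw [hPdef]
    unfold Phi
    refine (Finset.sum_congr rfl fun i _ => ?_).symm
    rw [← hks i, Finset.mul_sum]
    exact Finset.sum_congr rfl fun j _ => by ring
  have hslack : ∀ i, 0 < β i → Real.exp (-f i / 2) * s i = P := by
    intro i hpos
    have hzero : ∑ i, β i * (Real.exp (-f i / 2) * s i - P) = 0 := by
      have hexp2 : ∀ i, β i * (Real.exp (-f i / 2) * s i - P)
          = β i * (Real.exp (-f i / 2) * s i) - β i * P := fun i => by ring
      rw [Finset.sum_congr rfl fun i _ => hexp2 i, Finset.sum_sub_distrib, hPsum,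
        ← Finset.sum_mul, hβ1, one_mul, sub_self]
    have hz2 := (Finset.sum_eq_zero_iff_of_nonneg
      (fun i _ => mul_nonneg (hβ0 i) (sub_nonneg.mpr (hge i)))).mp hzero i (Finset.mem_univ i)
    rcases mul_eq_zero.mp hz2 with h' | h'
    · exact absurd h' hpos.ne'
    · linarith [sub_eq_zero.mp h']
  have hfE : ∀ i, extrap C f i = 2 * A + 2 * Real.log (s i) := by
    intro i
    have h1 : extrap C f i
        = -(-2 * Real.log (∑ j, β j * Real.exp ((-(f j - A) - C i j) / 2))) + A := by
      simp only [extrap, Tsoft, ← hβdef, ← hAdef]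
    have hsum : ∑ j, β j * Real.exp ((-(f j - A) - C i j) / 2) = Real.exp (A / 2) * s i := by
      simp only [hsdef]
      rw [Finset.mul_sum]
      refine Finset.sum_congr rfl fun j _ => ?_
      rw [show (-(f j - A) - C i j) / 2 = A / 2 + -(f j + C i j) / 2 by ring, Real.exp_add]
      ring
    rw [h1, hsum, Real.log_mul (Real.exp_ne_zero _) (hspos i).ne', Real.log_exp]
    ring
  have hsE : ∀ i, 0 < β i → Real.log (s i) = f i / 2 - A := by
    intro i hpos
    have h1 := hslack i hpos
    have h2 : Real.log (Real.exp (-f i / 2) * s i) = Real.log P := by rw [h1]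
    rw [Real.log_mul (Real.exp_ne_zero _) (hspos i).ne', Real.log_exp, hlogsP] at h2
    linarith
  have hfEf : ∀ i, 0 < β i → extrap C f i = f i := by
    intro i hpos
    rw [hfE i, hsE i hpos]; ring
  have hfge : ∀ i, f i ≤ extrap C f i := by
    intro i
    have h2 := Real.log_le_log hPpos (hge i)
    rw [Real.log_mul (Real.exp_ne_zero _) (hspos i).ne', Real.log_exp, hlogsP] at h2
    rw [hfE i]
    linarith
  set hh : Fin d → ℝ := fun i => A + 2 * Real.log (s i) with hhdef
  have hfEh : ∀ i, extrap C f i = hh i + A := by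
    intro i
    rw [hfE i]
    simp only [hhdef]
    ring
  have hpot : IsSinkhornPotential C β hh := by
    rw [IsSinkhornPotential]
    funext i
    simp only [Pi.neg_apply, Tsoft]
    have hsum : ∑ j, β j * Real.exp ((-hh j - C i j) / 2) = Real.exp (A / 2) * s i := by
      simp only [hsdef]
      rw [Finset.mul_sum]
      refine Finset.sum_congr rfl fun j _ => ?_
      rcases eq_or_lt_of_le (hβ0 j) with h0 | hpos
      · rw [← h0]; ring
      · have hj : hh j = f j - A := by
          simp only [hhdef]
          rw [hsE j hpos]
          ring
        rw [hj, show (-(f j - A) - C i j) / 2 = A / 2 + -(f j + C i j) / 2 by ring,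
          Real.exp_add]
        ring
    rw [hsum, Real.log_mul (Real.exp_ne_zero _) (hspos i).ne', Real.log_exp]
    simp only [hhdef]
    ring
  have hOmegaβ : Omega C β = ∑ i, β i * hh i :=
    FYAux.omega_of_potential hCsym hβ0 hβ1 hpot
  have hgrad : gradOmega C β = hh := by
    have hex2 : ∃ g : Fin d → ℝ, IsSinkhornPotential C β g := ⟨hh, hpot⟩
    rw [gradOmega, dif_pos hex2]
    exact FYAux.potential_unique hβ0 hβ1 hex2.choose_spec hpot
  have hMp : ∀ i, ∑ j, β j * Real.exp (-(extrap C f i + extrap C f j + C i j) / 2) = P := by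
    intro i
    have hexp : Real.exp (-(extrap C f i) / 2) = P * (s i)⁻¹ := by
      rw [hfE i, show -(2 * A + 2 * Real.log (s i)) / 2 = -A + -(Real.log (s i)) by ring,
        Real.exp_add, hAP, Real.exp_neg, Real.exp_log (hspos i)]
    have hsum : ∑ j, β j * Real.exp (-(extrap C f i + extrap C f j + C i j) / 2)
        = Real.exp (-(extrap C f i) / 2) * s i := by
      simp only [hsdef]
      rw [Finset.mul_sum]
      refine Finset.sum_congr rfl fun j _ => ?_
      rcases eq_or_lt_of_le (hβ0 j) with h0 | hpos
      · rw [← h0]; ring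
      · rw [hfEf j hpos, show -(extrap C f i + f j + C i j) / 2
          = -(extrap C f i) / 2 + -(f j + C i j) / 2 by ring, Real.exp_add]
        ring
    rw [hsum, hexp, mul_assoc, inv_mul_cancel₀ (hspos i).ne', mul_one]
  have hPhiβE : Phi C β (extrap C f) = P := by
    unfold Phi
    have hfac : ∀ i, ∑ j, β i * β j * Real.exp (-(extrap C f i + extrap C f j + C i j) / 2)
        = β i * P := by
      intro i
      rw [← hMp i, Finset.mul_sum]
      exact Finset.sum_congr rfl fun j _ => by ring
    rw [Finset.sum_congr rfl fun i _ => hfac i, ← Finset.sum_mul, hβ1, one_mul]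
  have hlbE : ∀ γ ∈ simplexS d, P ≤ Phi C γ (extrap C f) := by
    intro γ hγ
    have hγc : (∀ i, 0 ≤ γ i) ∧ ∑ i, γ i = 1 := hγ
    set M' : Matrix (Fin d) (Fin d) ℝ :=
      fun a b' => Real.exp (-(extrap C f a + extrap C f b' + C a b') / 2) with hM'
    have hM'sym : ∀ a b', M' a b' = M' b' a := by
      intro a b'
      simp only [hM']
      rw [hCsym.apply b' a, show -(extrap C f a + extrap C f b' + C b' a) / 2
        = -(extrap C f b' + extrap C f a + C b' a) / 2 by ring]
    have hQv : 0 ≤ FYAux.Bform M' (fun k => γ k - β k) (fun k => γ k - β k) := by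
      rw [hM']
      exact FYAux.Bform_nonneg hK (extrap C f) _
    have hexpand := FYAux.Bform_expand M' β (fun k => γ k - β k) 1
    have hid : (fun k => β k + 1 * (γ k - β k)) = γ := by funext k; ring
    rw [hid] at hexpand
    have hBββ : FYAux.Bform M' β β = P := by
      rw [← hPhiβE]
      unfold Phi FYAux.Bform
      simp only [hM']
    have hBγβ : FYAux.Bform M' γ β = P := by
      unfold FYAux.Bform
      have hfac : ∀ a, ∑ j, γ a * β j * M' a j = γ a * P := by
        intro a
        rw [← hMp a, Finset.mul_sum]
        refine Finset.sum_congr rfl fun j _ => ?_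
        simp only [hM']
        ring
      rw [Finset.sum_congr rfl fun a _ => hfac a, ← Finset.sum_mul, hγc.2, one_mul]
    have hBvβ : FYAux.Bform M' (fun k => γ k - β k) β = 0 := by
      have hsplit : FYAux.Bform M' (fun k => γ k - β k) β
          = FYAux.Bform M' γ β - FYAux.Bform M' β β := by
        unfold FYAux.Bform
        rw [← Finset.sum_sub_distrib]
        refine Finset.sum_congr rfl fun x _ => ?_
        rw [← Finset.sum_sub_distrib]
        exact Finset.sum_congr rfl fun y _ => by ring
      rw [hsplit, hBγβ, hBββ, sub_self]
    have hBβv : FYAux.Bform M' β (fun k => γ k - β k) = 0 := by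
      rw [FYAux.Bform_comm M' hM'sym, hBvβ]
    have hPhiγ : Phi C γ (extrap C f) = FYAux.Bform M' γ γ := by
      unfold Phi FYAux.Bform
      simp only [hM']
    rw [hPhiγ, hexpand, hBβv, hBvβ, hBββ]
    linarith [hQv]
  have hsinfE : sInf ((fun γ => Phi C γ (extrap C f)) '' simplexS d) = P := by
    refine IsLeast.csInf_eq ⟨⟨β, hβS, hPhiβE⟩, ?_⟩
    rintro y ⟨γ, hγ, rfl⟩
    exact hlbE γ hγ
  have hOSE : OmegaStar C (extrap C f) = A := by
    rw [OmegaStar, hsinfE]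
    exact hA.symm
  have hsumfE : ∑ i, α i * extrap C f i = (∑ i, α i * hh i) + A := by
    rw [Finset.sum_congr rfl fun i _ => by rw [hfEh i, mul_add]]
    rw [Finset.sum_add_distrib, ← Finset.sum_mul, hαc.2, one_mul]
  have hDeq : DOmega C α β = Omega C α - ∑ i, α i * hh i := by
    rw [DOmega, hgrad, hOmegaβ]
    have e1 : ∑ i, hh i * (α i - β i) = (∑ i, α i * hh i) - ∑ i, β i * hh i := by
      rw [← Finset.sum_sub_distrib]
      exact Finset.sum_congr rfl fun i _ => by ring
    rw [e1]
    ring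
  have hFYE : FYloss C α (extrap C f) = Omega C α - ∑ i, α i * hh i := by
    rw [FYloss, hOSE, hsumfE]
    ring
  have goal1 : DOmega C α β = FYloss C α (extrap C f) := by rw [hDeq, hFYE]
  have hsub : ∑ i, α i * (extrap C f i - f i)
      = (∑ i, α i * extrap C f i) - ∑ i, α i * f i := by
    rw [← Finset.sum_sub_distrib]
    exact Finset.sum_congr rfl fun i _ => by ring
  have goal2 : FYloss C α (extrap C f) = FYloss C α f - ∑ i, α i * (extrap C f i - f i) := by
    rw [FYloss, FYloss, hOSE, hsub, ← hAdef]
    ring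
  have hnn : 0 ≤ ∑ i, α i * (extrap C f i - f i) :=
    Finset.sum_nonneg fun i _ => mul_nonneg (hαc.1 i) (sub_nonneg.mpr (hfge i))
  refine ⟨goal1, goal2, ?_, ?_⟩
  · rw [goal1, goal2]
    linarith
  · intro hsupp
    have hzero : ∑ i, α i * (extrap C f i - f i) = 0 := by
      refine Finset.sum_eq_zero fun i _ => ?_
      by_cases hai : α i = 0
      · rw [hai, zero_mul]
      · have hβi : β i ≠ 0 := by
          have hmem : i ∈ Function.support α := hai
          rw [← hsupp] at hmem
          exact hmem
        have hβpos : 0 < β i := lt_of_le_of_ne (hβ0 i) (Ne.symm hβi)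
        rw [hfEf i hβpos, sub_self, mul_zero]
    rw [goal1, goal2, hzero, sub_zero]
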